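/- The concavity gap of Φ₁ admits the explicit formula: for psd A₁, A₂ with positive traces and θ ∈ (0,1), Φ₁(θA₁+(1−θ)A₂) − θΦ₁(A₁) − (1−θ)Φ₁(A₂) = [θ(1−θ) tr(A₁) tr(A₂) / (θ tr(A₁) + (1−θ) tr(A₂))] · (A₁/tr(A₁) − A₂/tr(A₂))², which is psd. -/

import Mathlib

open ComplexOrder

noncomputable def Phi1 {N : ℕ} (A : Matrix (Fin N) (Fin N) ℂ) : Matrix (Fin N) (Fin N) ℂ :=
  A - (Matrix.trace A)⁻¹ • A ^ 2

lemma trace_real_of_posSemidef {N : ℕ} {A : Matrix (Fin N) (Fin N) ℂ} (hA : A.PosSemidef) :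
    Matrix.trace A = ((Matrix.trace A).re : ℂ) := by
  have h : star (Matrix.trace A) = Matrix.trace A := by
    rw [← Matrix.trace_conjTranspose, hA.isHermitian.eq]
  exact (Complex.conj_eq_iff_re.mp h).symm

lemma posSemidef_real_smul {N : ℕ} {M : Matrix (Fin N) (Fin N) ℂ} (hM : M.PosSemidef)
    {c : ℝ} (hc : 0 ≤ c) : ((c : ℂ) • M).PosSemidef := by
  constructor
  · unfold Matrix.IsHermitian
    rw [Matrix.conjTranspose_smul, hM.1.eq]
    simp
  · intro x
    exact (hM.smul (Complex.zero_le_real.mpr hc)).2 x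

theorem Phi1_concavity_gap {N : ℕ} (A₁ A₂ : Matrix (Fin N) (Fin N) ℂ)
    (hA₁ : A₁.PosSemidef) (hA₂ : A₂.PosSemidef)
    (ht₁ : 0 < (Matrix.trace A₁).re) (ht₂ : 0 < (Matrix.trace A₂).re)
    (θ : ℝ) (hθ0 : 0 < θ) (hθ1 : θ < 1) :
    Phi1 ((θ : ℂ) • A₁ + ((1 : ℂ) - θ) • A₂)
        - (θ : ℂ) • Phi1 A₁ - ((1 : ℂ) - θ) • Phi1 A₂
      = ((θ : ℂ) * (1 - θ) * Matrix.trace A₁ * Matrix.trace A₂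
          / ((θ : ℂ) * Matrix.trace A₁ + (1 - θ) * Matrix.trace A₂))
          • ((Matrix.trace A₁)⁻¹ • A₁ - (Matrix.trace A₂)⁻¹ • A₂) ^ 2
    ∧ (Phi1 ((θ : ℂ) • A₁ + ((1 : ℂ) - θ) • A₂)
        - (θ : ℂ) • Phi1 A₁ - ((1 : ℂ) - θ) • Phi1 A₂).PosSemidef := by
  set r₁ : ℝ := (Matrix.trace A₁).re with hr₁
  set r₂ : ℝ := (Matrix.trace A₂).re with hr₂
  have h₁ : Matrix.trace A₁ = (r₁ : ℂ) := trace_real_of_posSemidef hA₁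
  have h₂ : Matrix.trace A₂ = (r₂ : ℂ) := trace_real_of_posSemidef hA₂
  have hr₁0 : (0 : ℝ) < r₁ := ht₁
  have hr₂0 : (0 : ℝ) < r₂ := ht₂
  have h1θ : (0:ℝ) < 1 - θ := by linarith
  have hden : (0 : ℝ) < θ * r₁ + (1 - θ) * r₂ := by positivity
  have ht₁' : (r₁ : ℂ) ≠ 0 := by exact_mod_cast hr₁0.ne'
  have ht₂' : (r₂ : ℂ) ≠ 0 := by exact_mod_cast hr₂0.ne'
  have ht' : (θ : ℂ) * (r₁ : ℂ) + (1 - θ) * (r₂ : ℂ) ≠ 0 := by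
    have : ((θ * r₁ + (1 - θ) * r₂ : ℝ) : ℂ) ≠ 0 := by exact_mod_cast hden.ne'
    push_cast at this
    convert this using 2
  have htr : Matrix.trace ((θ : ℂ) • A₁ + ((1 : ℂ) - θ) • A₂)
      = (θ : ℂ) * (r₁ : ℂ) + (1 - θ) * (r₂ : ℂ) := by
    simp [Matrix.trace_add, Matrix.trace_smul, smul_eq_mul, h₁, h₂]
  have key : Phi1 ((θ : ℂ) • A₁ + ((1 : ℂ) - θ) • A₂)
        - (θ : ℂ) • Phi1 A₁ - ((1 : ℂ) - θ) • Phi1 A₂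
      = ((θ : ℂ) * (1 - θ) * Matrix.trace A₁ * Matrix.trace A₂
          / ((θ : ℂ) * Matrix.trace A₁ + (1 - θ) * Matrix.trace A₂))
          • ((Matrix.trace A₁)⁻¹ • A₁ - (Matrix.trace A₂)⁻¹ • A₂) ^ 2 := by
    simp only [Phi1, htr, h₁, h₂, sq, Matrix.add_mul, Matrix.mul_add, Matrix.sub_mul,
      Matrix.mul_sub, Matrix.smul_mul, Matrix.mul_smul, smul_smul, smul_sub, smul_add]
    match_scalars <;> field_simp <;> ring
  refine ⟨key, ?_⟩
  rw [key]
  -- the coefficient is a nonneg real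
  set c : ℝ := θ * (1 - θ) * r₁ * r₂ / (θ * r₁ + (1 - θ) * r₂) with hc
  have hc0 : 0 ≤ c := by
    apply div_nonneg _ hden.le
    positivity
  have hcoef : ((θ : ℂ) * (1 - θ) * Matrix.trace A₁ * Matrix.trace A₂
      / ((θ : ℂ) * Matrix.trace A₁ + (1 - θ) * Matrix.trace A₂)) = (c : ℂ) := by
    rw [h₁, h₂, hc]
    push_cast
    ring
  rw [hcoef]
  -- B is Hermitian, so B^2 = Bᴴ * B is psd
  have hB : ((Matrix.trace A₁)⁻¹ • A₁ - (Matrix.trace A₂)⁻¹ • A₂).IsHermitian := by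
    unfold Matrix.IsHermitian
    rw [Matrix.conjTranspose_sub, Matrix.conjTranspose_smul, Matrix.conjTranspose_smul,
      hA₁.1.eq, hA₂.1.eq, h₁, h₂]
    simp [← Complex.ofReal_inv, Complex.conj_ofReal]
  have hsq : (((Matrix.trace A₁)⁻¹ • A₁ - (Matrix.trace A₂)⁻¹ • A₂) ^ 2).PosSemidef := by
    have := Matrix.posSemidef_conjTranspose_mul_self
      ((Matrix.trace A₁)⁻¹ • A₁ - (Matrix.trace A₂)⁻¹ • A₂)
    rwa [hB.eq, ← pow_two] at this
  exact posSemidef_real_smul hsq hc0
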